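/- arXiv:1107.5952 — 2 statements merged into one kernel-verified Lean document; each statement's English description precedes it below -/
import Mathlib

section
/- Let h : S^m → S^n be a smooth map, and for tangent vectors u,v at x ∈ S^m define the curvature operator F_{uv} acting on vectors Y tangent to S^n at h(x) by F_{uv}Y = ⟨∂_v h, Y⟩∂_u h - ⟨∂_u h, Y⟩∂_v h. If there exist constants λ > 0 and μ ≥ 0 with |dh|² ≡ λ and Σ_v F_{uv}(∂_v h) = μ ∂_u h for every u (summing v over an orthonormal basis of T_x S^m), then the squared norm of the curvature satisfies |F|² ≡ 2λμ. -/
/-- Yang-Mills eigenmap identity: pointwise, if the differentials `p u = ∂ₑ h` satisfy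
`∑ u, ‖p u‖² = λ` and the eigenmap equation `∑ v, F u v (p v) = μ • p u`, where
`F u v Y = ⟪p v, Y⟫ • p u - ⟪p u, Y⟫ • p v`, then the squared curvature norm
`|F|² = ∑ u v U V, ⟪F u v (b U), b V⟫²` equals `2 λ μ`. -/
theorem stmt1 {V : Type*} [NormedAddCommGroup V] [InnerProductSpace ℝ V]
    (m N : ℕ) (p : Fin m → V) (b : OrthonormalBasis (Fin N) ℝ V)
    (lam mu : ℝ) (hlam : 0 < lam) (hmu : 0 ≤ mu)
    (F : Fin m → Fin m → V → V)
    (hF : ∀ u v Y, F u v Y = (inner ℝ (p v) Y : ℝ) • p u - (inner ℝ (p u) Y : ℝ) • p v)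
    (hdh : ∑ u, ‖p u‖ ^ 2 = lam)
    (heig : ∀ u, ∑ v, F u v (p v) = mu • p u) :
    ∑ u, ∑ v, ∑ U, ∑ W, (inner ℝ (F u v (b U)) (b W) : ℝ) ^ 2 = 2 * lam * mu := by
  -- Parseval: ∑ W ⟪x, b W⟫² = ⟪x, x⟫
  have hW : ∀ x : V, ∑ W, (inner ℝ x (b W) : ℝ) ^ 2 = (inner ℝ x x : ℝ) := by
    intro x
    have := b.sum_inner_mul_inner x x
    rw [← this]
    refine Finset.sum_congr rfl fun W _ => ?_
    rw [pow_two, real_inner_comm (b W) x]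
  -- inner sum over each pair u, v
  have key : ∀ u v : Fin m, ∑ U, ∑ W, (inner ℝ (F u v (b U)) (b W) : ℝ) ^ 2
      = 2 * ((inner ℝ (p u) (p u) : ℝ) * (inner ℝ (p v) (p v) : ℝ)
          - (inner ℝ (p u) (p v) : ℝ) ^ 2) := by
    intro u v
    have h1 := b.sum_inner_mul_inner (p u) (p u)
    have h2 := b.sum_inner_mul_inner (p v) (p v)
    have h3 := b.sum_inner_mul_inner (p u) (p v)
    have step : ∀ U : Fin N, ∑ W, (inner ℝ (F u v (b U)) (b W) : ℝ) ^ 2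
        = (inner ℝ (p u) (p u) : ℝ) * ((inner ℝ (p v) (b U) : ℝ) * (inner ℝ (b U) (p v) : ℝ))
        - 2 * (inner ℝ (p u) (p v) : ℝ) * ((inner ℝ (p u) (b U) : ℝ) * (inner ℝ (b U) (p v) : ℝ))
        + (inner ℝ (p v) (p v) : ℝ) * ((inner ℝ (p u) (b U) : ℝ) * (inner ℝ (b U) (p u) : ℝ)) := by
      intro U
      rw [hW]
      simp only [hF, inner_sub_left, inner_sub_right, inner_smul_left, inner_smul_right,
        RCLike.inner_apply, conj_trivial]
      rw [real_inner_comm (b U) (p u), real_inner_comm (b U) (p v),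
        real_inner_comm (p v) (p u)]
      ring
    calc ∑ U, ∑ W, (inner ℝ (F u v (b U)) (b W) : ℝ) ^ 2
        = ∑ U, ((inner ℝ (p u) (p u) : ℝ) * ((inner ℝ (p v) (b U) : ℝ) * (inner ℝ (b U) (p v) : ℝ))
          - 2 * (inner ℝ (p u) (p v) : ℝ) * ((inner ℝ (p u) (b U) : ℝ) * (inner ℝ (b U) (p v) : ℝ))
          + (inner ℝ (p v) (p v) : ℝ) * ((inner ℝ (p u) (b U) : ℝ) * (inner ℝ (b U) (p u) : ℝ))) :=
          Finset.sum_congr rfl fun U _ => step U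
      _ = (inner ℝ (p u) (p u) : ℝ) * (∑ U, (inner ℝ (p v) (b U) : ℝ) * (inner ℝ (b U) (p v) : ℝ))
          - 2 * (inner ℝ (p u) (p v) : ℝ) * (∑ U, (inner ℝ (p u) (b U) : ℝ) * (inner ℝ (b U) (p v) : ℝ))
          + (inner ℝ (p v) (p v) : ℝ) * (∑ U, (inner ℝ (p u) (b U) : ℝ) * (inner ℝ (b U) (p u) : ℝ)) := by
          simp [Finset.sum_add_distrib, Finset.sum_sub_distrib, Finset.mul_sum]
      _ = 2 * ((inner ℝ (p u) (p u) : ℝ) * (inner ℝ (p v) (p v) : ℝ)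
          - (inner ℝ (p u) (p v) : ℝ) ^ 2) := by
          rw [h1, h2, h3]; ring
  -- eigenmap identity summed over u
  have hsum : ∑ u, ∑ v, ((inner ℝ (p u) (p u) : ℝ) * (inner ℝ (p v) (p v) : ℝ)
      - (inner ℝ (p u) (p v) : ℝ) ^ 2) = lam * mu := by
    have hu : ∀ u : Fin m, ∑ v, ((inner ℝ (p u) (p u) : ℝ) * (inner ℝ (p v) (p v) : ℝ)
        - (inner ℝ (p u) (p v) : ℝ) ^ 2) = mu * (inner ℝ (p u) (p u) : ℝ) := by
      intro u
      have := congrArg (fun y => (inner ℝ y (p u) : ℝ)) (heig u)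
      simp only [sum_inner, inner_smul_left, RCLike.inner_apply, conj_trivial] at this
      rw [← this]
      refine Finset.sum_congr rfl fun v _ => ?_
      simp only [hF, inner_sub_left, inner_smul_left, RCLike.inner_apply, conj_trivial]
      rw [real_inner_comm (p v) (p u)]
      ring
    calc ∑ u, ∑ v, ((inner ℝ (p u) (p u) : ℝ) * (inner ℝ (p v) (p v) : ℝ)
        - (inner ℝ (p u) (p v) : ℝ) ^ 2)
        = ∑ u, mu * (inner ℝ (p u) (p u) : ℝ) := Finset.sum_congr rfl fun u _ => hu u
      _ = mu * ∑ u, ‖p u‖ ^ 2 := by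
          simp [← Finset.mul_sum, real_inner_self_eq_norm_sq]
      _ = lam * mu := by rw [hdh]; ring
  calc ∑ u, ∑ v, ∑ U, ∑ W, (inner ℝ (F u v (b U)) (b W) : ℝ) ^ 2
      = ∑ u, ∑ v, 2 * ((inner ℝ (p u) (p u) : ℝ) * (inner ℝ (p v) (p v) : ℝ)
        - (inner ℝ (p u) (p v) : ℝ) ^ 2) :=
        Finset.sum_congr rfl fun u _ => Finset.sum_congr rfl fun v _ => key u v
    _ = 2 * (lam * mu) := by simp only [← Finset.mul_sum]; rw [hsum]
    _ = 2 * lam * mu := by ring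
end

section
/- Let (α,β) be a C² solution on (0,π/2) of the system α'' + (m₂ cot - (m₁-2) tan)α' - (μ₁/cos²)(α³-α) - (λ₂/sin²)αβ² = 0 and β'' + ((m₂-2) cot - m₁ tan)β' - (μ₂/sin²)(β³-β) - (λ₁/cos²)α²β = 0 with 0 ≤ α ≤ 1, 0 ≤ β ≤ 1, λ₂ > 0. If α(t₀) = 1 at some t₀ ∈ (0,π/2), then (α,β) ≡ (1,0) on (0,π/2). -/
open Real

abbrev E5 := ℝ × ℝ × ℝ × ℝ × ℝ

/-- The autonomized first-order vector field for the reduced system. -/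
noncomputable def wf (M₁ M₂ lam₁ lam₂ mu₁ mu₂ : ℝ) : E5 → E5 := fun y =>
  (1,
   y.2.2.1,
   -(M₂ * (Real.cos y.1 / Real.sin y.1) - (M₁ - 2) * (Real.sin y.1 / Real.cos y.1)) * y.2.2.1
     + (mu₁ / Real.cos y.1 ^ 2) * (y.2.1 ^ 3 - y.2.1)
     + (lam₂ / Real.sin y.1 ^ 2) * y.2.1 * y.2.2.2.1 ^ 2,
   y.2.2.2.2,
   -((M₂ - 2) * (Real.cos y.1 / Real.sin y.1) - M₁ * (Real.sin y.1 / Real.cos y.1)) * y.2.2.2.2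
     + (mu₂ / Real.sin y.1 ^ 2) * (y.2.2.2.1 ^ 3 - y.2.2.2.1)
     + (lam₁ / Real.cos y.1 ^ 2) * y.2.1 ^ 2 * y.2.2.2.1)

lemma wf_equilibrium (M₁ M₂ lam₁ lam₂ mu₁ mu₂ t : ℝ) :
    wf M₁ M₂ lam₁ lam₂ mu₁ mu₂ (t, 1, 0, 0, 0) = (1, 0, 0, 0, 0) := by
  norm_num [wf]

lemma wf_contDiffAt (M₁ M₂ lam₁ lam₂ mu₁ mu₂ : ℝ) (x : E5)
    (h1 : Real.sin x.1 ≠ 0) (h2 : Real.cos x.1 ≠ 0) :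
    ContDiffAt ℝ 1 (wf M₁ M₂ lam₁ lam₂ mu₁ mu₂) x := by
  have p1 : ContDiff ℝ 1 (fun y : E5 => y.1) := contDiff_fst
  have p2 : ContDiff ℝ 1 (fun y : E5 => y.2.1) := contDiff_fst.comp contDiff_snd
  have p3 : ContDiff ℝ 1 (fun y : E5 => y.2.2.1) :=
    contDiff_fst.comp (contDiff_snd.comp contDiff_snd)
  have p4 : ContDiff ℝ 1 (fun y : E5 => y.2.2.2.1) :=
    contDiff_fst.comp (contDiff_snd.comp (contDiff_snd.comp contDiff_snd))
  have p5 : ContDiff ℝ 1 (fun y : E5 => y.2.2.2.2) :=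
    contDiff_snd.comp (contDiff_snd.comp (contDiff_snd.comp contDiff_snd))
  have hs : ContDiff ℝ 1 (fun y : E5 => Real.sin y.1) := (Real.contDiff_sin.of_le le_top).comp p1
  have hc : ContDiff ℝ 1 (fun y : E5 => Real.cos y.1) := (Real.contDiff_cos.of_le le_top).comp p1
  have hcot : ContDiffAt ℝ 1 (fun y : E5 => Real.cos y.1 / Real.sin y.1) x :=
    hc.contDiffAt.div hs.contDiffAt h1
  have htan : ContDiffAt ℝ 1 (fun y : E5 => Real.sin y.1 / Real.cos y.1) x :=
    hs.contDiffAt.div hc.contDiffAt h2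
  unfold wf
  refine (contDiffAt_const (c := (1:ℝ))).prodMk (p3.contDiffAt.prodMk (ContDiffAt.prodMk ?_
    (p5.contDiffAt.prodMk ?_)))
  · refine ContDiffAt.add (ContDiffAt.add (ContDiffAt.mul (ContDiffAt.neg ?_) p3.contDiffAt) ?_) ?_
    · exact (contDiffAt_const.mul hcot).sub (contDiffAt_const.mul htan)
    · exact (contDiffAt_const.div (hc.contDiffAt.pow 2) (pow_ne_zero 2 h2)).mul
        ((p2.contDiffAt.pow 3).sub p2.contDiffAt)
    · exact ((contDiffAt_const.div (hs.contDiffAt.pow 2) (pow_ne_zero 2 h1)).mul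
        p2.contDiffAt).mul (p4.contDiffAt.pow 2)
  · refine ContDiffAt.add (ContDiffAt.add (ContDiffAt.mul (ContDiffAt.neg ?_) p5.contDiffAt) ?_) ?_
    · exact (contDiffAt_const.mul hcot).sub (contDiffAt_const.mul htan)
    · exact (contDiffAt_const.div (hs.contDiffAt.pow 2) (pow_ne_zero 2 h1)).mul
        ((p4.contDiffAt.pow 3).sub p4.contDiffAt)
    · exact ((contDiffAt_const.div (hc.contDiffAt.pow 2) (pow_ne_zero 2 h2)).mul
        (p2.contDiffAt.pow 2)).mul p4.contDiffAt

/-- If a `C²` solution `(α, β)` of the reduced system on `(0, π/2)` with values in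
`[0,1] × [0,1]` and `λ₂ > 0` satisfies `α t₀ = 1` at some interior point, then
`(α, β) ≡ (1, 0)` on `(0, π/2)`. -/
theorem stmt6 (m₁ m₂ : ℕ) (hm₁ : 2 ≤ m₁) (hm₂ : 2 ≤ m₂)
    (lam₁ lam₂ mu₁ mu₂ : ℝ) (hl₂ : 0 < lam₂)
    (α β : ℝ → ℝ)
    (hreg : ContDiffOn ℝ 2 α (Set.Ioo 0 (π/2)) ∧ ContDiffOn ℝ 2 β (Set.Ioo 0 (π/2)))
    (hαrange : ∀ t ∈ Set.Ioo 0 (π/2), α t ∈ Set.Icc (0:ℝ) 1)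
    (hβrange : ∀ t ∈ Set.Ioo 0 (π/2), β t ∈ Set.Icc (0:ℝ) 1)
    (hode₁ : ∀ t ∈ Set.Ioo 0 (π/2),
      deriv (deriv α) t
        + ((m₂ : ℝ) * (Real.cos t / Real.sin t) - ((m₁ : ℝ) - 2) * Real.tan t) * deriv α t
        - (mu₁ / Real.cos t ^ 2) * (α t ^ 3 - α t)
        - (lam₂ / Real.sin t ^ 2) * α t * β t ^ 2 = 0)
    (hode₂ : ∀ t ∈ Set.Ioo 0 (π/2),
      deriv (deriv β) t
        + (((m₂ : ℝ) - 2) * (Real.cos t / Real.sin t) - (m₁ : ℝ) * Real.tan t) * deriv β t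
        - (mu₂ / Real.sin t ^ 2) * (β t ^ 3 - β t)
        - (lam₁ / Real.cos t ^ 2) * α t ^ 2 * β t = 0)
    (t₀ : ℝ) (ht₀ : t₀ ∈ Set.Ioo 0 (π/2)) (hα₀ : α t₀ = 1) :
    ∀ t ∈ Set.Ioo 0 (π/2), α t = 1 ∧ β t = 0 := by
  obtain ⟨hregα, hregβ⟩ := hreg
  have hpi : (0:ℝ) < π := Real.pi_pos
  have hIo : IsOpen (Set.Ioo (0:ℝ) (π/2)) := isOpen_Ioo
  have hsin : ∀ t ∈ Set.Ioo (0:ℝ) (π/2), 0 < Real.sin t := fun t ht =>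
    Real.sin_pos_of_pos_of_lt_pi ht.1 (by linarith [ht.2])
  have hcos : ∀ t ∈ Set.Ioo (0:ℝ) (π/2), 0 < Real.cos t := fun t ht =>
    Real.cos_pos_of_mem_Ioo ⟨by linarith [ht.1], ht.2⟩
  -- derivative infrastructure
  have hα1 : ContDiffOn ℝ 1 (deriv α) (Set.Ioo 0 (π/2)) :=
    hregα.deriv_of_isOpen hIo (by norm_num)
  have hβ1 : ContDiffOn ℝ 1 (deriv β) (Set.Ioo 0 (π/2)) :=
    hregβ.deriv_of_isOpen hIo (by norm_num)
  have hαc : ContinuousOn α (Set.Ioo 0 (π/2)) := hregα.continuousOn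
  have hα'c : ContinuousOn (deriv α) (Set.Ioo 0 (π/2)) := hα1.continuousOn
  have hα''c : ContinuousOn (deriv (deriv α)) (Set.Ioo 0 (π/2)) :=
    (hα1.deriv_of_isOpen (m := 0) hIo (by norm_num)).continuousOn
  have hdα : ∀ t ∈ Set.Ioo (0:ℝ) (π/2), HasDerivAt α (deriv α t) t := fun t ht =>
    (((hregα.differentiableOn (by norm_num)).differentiableAt (hIo.mem_nhds ht))).hasDerivAt
  have hddα : ∀ t ∈ Set.Ioo (0:ℝ) (π/2), HasDerivAt (deriv α) (deriv (deriv α) t) t := fun t ht =>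
    (((hα1.differentiableOn (by norm_num)).differentiableAt (hIo.mem_nhds ht))).hasDerivAt
  have hdβ : ∀ t ∈ Set.Ioo (0:ℝ) (π/2), HasDerivAt β (deriv β t) t := fun t ht =>
    (((hregβ.differentiableOn (by norm_num)).differentiableAt (hIo.mem_nhds ht))).hasDerivAt
  have hddβ : ∀ t ∈ Set.Ioo (0:ℝ) (π/2), HasDerivAt (deriv β) (deriv (deriv β) t) t := fun t ht =>
    (((hβ1.differentiableOn (by norm_num)).differentiableAt (hIo.mem_nhds ht))).hasDerivAt
  -- ODEs in explicit form
  have Hα : ∀ t ∈ Set.Ioo (0:ℝ) (π/2), deriv (deriv α) t =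
      -((m₂ : ℝ) * (Real.cos t / Real.sin t) - ((m₁ : ℝ) - 2) * (Real.sin t / Real.cos t))
          * deriv α t
        + (mu₁ / Real.cos t ^ 2) * (α t ^ 3 - α t)
        + (lam₂ / Real.sin t ^ 2) * α t * β t ^ 2 := by
    intro t ht
    have h := hode₁ t ht
    rw [Real.tan_eq_sin_div_cos] at h
    linear_combination h
  have Hβ : ∀ t ∈ Set.Ioo (0:ℝ) (π/2), deriv (deriv β) t =
      -(((m₂ : ℝ) - 2) * (Real.cos t / Real.sin t) - (m₁ : ℝ) * (Real.sin t / Real.cos t))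
          * deriv β t
        + (mu₂ / Real.sin t ^ 2) * (β t ^ 3 - β t)
        + (lam₁ / Real.cos t ^ 2) * α t ^ 2 * β t := by
    intro t ht
    have h := hode₂ t ht
    rw [Real.tan_eq_sin_div_cos] at h
    linear_combination h
  -- the solution curve of the autonomized system
  set W : E5 → E5 := wf (m₁ : ℝ) (m₂ : ℝ) lam₁ lam₂ mu₁ mu₂ with hW
  set F : ℝ → E5 := fun t => (t, α t, deriv α t, β t, deriv β t) with hF
  set G : ℝ → E5 := fun t => (t, 1, 0, 0, 0) with hG
  have hFder : ∀ t ∈ Set.Ioo (0:ℝ) (π/2), HasDerivAt F (W (F t)) t := by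
    intro t ht
    have h5 : HasDerivAt F
        (1, deriv α t, deriv (deriv α) t, deriv β t, deriv (deriv β) t) t :=
      (hasDerivAt_id t).prodMk ((hdα t ht).prodMk ((hddα t ht).prodMk ((hdβ t ht).prodMk (hddβ t ht))))
    have heq : W (F t) = (1, deriv α t, deriv (deriv α) t, deriv β t, deriv (deriv β) t) := by
      simp only [hW, hF, wf, Prod.mk.injEq]
      exact ⟨trivial, trivial, (Hα t ht).symm, trivial, (Hβ t ht).symm⟩
    rw [heq]; exact h5
  have hGder : ∀ t : ℝ, HasDerivAt G (W (G t)) t := by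
    intro t
    have h5 : HasDerivAt G ((1:ℝ), (0:ℝ), (0:ℝ), (0:ℝ), (0:ℝ)) t :=
      (hasDerivAt_id t).prodMk ((hasDerivAt_const t 1).prodMk ((hasDerivAt_const t 0).prodMk
        ((hasDerivAt_const t 0).prodMk (hasDerivAt_const t 0))))
    have heq : W (G t) = ((1:ℝ), (0:ℝ), (0:ℝ), (0:ℝ), (0:ℝ)) :=
      wf_equilibrium _ _ _ _ _ _ t
    rw [heq]; exact h5
  -- key local lemma
  have key : ∀ t₁ ∈ Set.Ioo (0:ℝ) (π/2), α t₁ = 1 →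
      β t₁ = 0 ∧ ∀ᶠ t in nhds t₁, α t = 1 := by
    intro t₁ ht₁ hα1'
    have hmax : IsLocalMax α t₁ := by
      filter_upwards [hIo.mem_nhds ht₁] with t ht
      rw [hα1']; exact (hαrange t ht).2
    have hα'0 : deriv α t₁ = 0 := hmax.deriv_eq_zero
    -- second derivative test
    have hα''le : deriv (deriv α) t₁ ≤ 0 := by
      by_contra hcon
      push_neg at hcon
      have hcont : ContinuousAt (deriv (deriv α)) t₁ := hα''c.continuousAt (hIo.mem_nhds ht₁)
      have hev : ∀ᶠ t in nhds t₁, 0 < deriv (deriv α) t ∧ t ∈ Set.Ioo (0:ℝ) (π/2) :=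
        (hcont.eventually (eventually_gt_nhds hcon)).and (hIo.mem_nhds ht₁)
      rw [Metric.eventually_nhds_iff] at hev
      obtain ⟨δ, hδ, hball⟩ := hev
      set b := t₁ + δ/2 with hb
      have hsub : Set.Icc t₁ b ⊆ {t | 0 < deriv (deriv α) t ∧ t ∈ Set.Ioo (0:ℝ) (π/2)} := by
        intro t ht
        refine hball ?_
        rw [Real.dist_eq, abs_lt]
        have h1 := ht.1
        have h2 := ht.2
        rw [hb] at h2
        constructor <;> linarith
      have h1 : StrictMonoOn (deriv α) (Set.Icc t₁ b) := by
        refine strictMonoOn_of_deriv_pos (convex_Icc _ _)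
          (hα'c.mono fun t ht => (hsub ht).2) ?_
        intro t ht
        rw [interior_Icc] at ht
        exact (hsub (Set.Ioo_subset_Icc_self ht)).1
      have h2 : StrictMonoOn α (Set.Icc t₁ b) := by
        refine strictMonoOn_of_deriv_pos (convex_Icc _ _)
          (hαc.mono fun t ht => (hsub ht).2) ?_
        intro t ht
        rw [interior_Icc] at ht
        have htb : t₁ ≤ b := by rw [hb]; linarith
        have := h1 (Set.left_mem_Icc.mpr htb) (Set.Ioo_subset_Icc_self ht) ht.1
        rwa [hα'0] at this
      have htb : t₁ < b := by rw [hb]; linarith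
      have hlt : α t₁ < α b :=
        h2 (Set.left_mem_Icc.mpr htb.le) (Set.right_mem_Icc.mpr htb.le) htb
      have hbI : b ∈ Set.Ioo (0:ℝ) (π/2) :=
        (hsub (Set.right_mem_Icc.mpr htb.le)).2
      have := (hαrange b hbI).2
      rw [hα1'] at hlt
      linarith
    -- β t₁ = 0
    have hQ : 0 < lam₂ / Real.sin t₁ ^ 2 := div_pos hl₂ (pow_pos (hsin t₁ ht₁) 2)
    have hβ0 : β t₁ = 0 := by
      have h := Hα t₁ ht₁
      rw [hα1', hα'0] at h
      have hsq : β t₁ ^ 2 = 0 := by nlinarith [sq_nonneg (β t₁)]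
      exact (pow_eq_zero_iff two_ne_zero).mp hsq
    have hmin : IsLocalMin β t₁ := by
      filter_upwards [hIo.mem_nhds ht₁] with t ht
      rw [hβ0]; exact (hβrange t ht).1
    have hβ'0 : deriv β t₁ = 0 := hmin.deriv_eq_zero
    refine ⟨hβ0, ?_⟩
    -- local uniqueness of the ODE
    have hFt₁ : F t₁ = (t₁, 1, 0, 0, 0) := by
      simp only [hF, hα1', hα'0, hβ0, hβ'0]
    have hcd : ContDiffAt ℝ 1 W ((t₁, 1, 0, 0, 0) : E5) :=
      wf_contDiffAt _ _ _ _ _ _ _ (ne_of_gt (hsin t₁ ht₁)) (ne_of_gt (hcos t₁ ht₁))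
    obtain ⟨K, sK, hsK, hlip⟩ := hcd.exists_lipschitzOnWith
    have hFc : ContinuousAt F t₁ := (hFder t₁ ht₁).continuousAt
    have hGc : ContinuousAt G t₁ := (hGder t₁).continuousAt
    have hFev : ∀ᶠ t in nhds t₁, F t ∈ sK := by
      have : sK ∈ nhds (F t₁) := by rw [hFt₁]; exact hsK
      exact hFc this
    have hGev : ∀ᶠ t in nhds t₁, G t ∈ sK := by
      have : sK ∈ nhds (G t₁) := hsK
      exact hGc this
    have huniq : F =ᶠ[nhds t₁] G := by
      refine ODE_solution_unique_of_eventually (v := fun _ : ℝ => W) (s := fun _ => sK)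
        (Filter.Eventually.of_forall fun _ => hlip) ?_ ?_ ?_
      · filter_upwards [hIo.mem_nhds ht₁, hFev] with t h1 h2
        exact ⟨hFder t h1, h2⟩
      · filter_upwards [hGev] with t h2
        exact ⟨hGder t, h2⟩
      · rw [hFt₁]
    filter_upwards [huniq] with t ht
    exact congrArg (fun y : E5 => y.2.1) ht
  -- connectedness argument
  have hS : ∀ t ∈ Set.Ioo (0:ℝ) (π/2), α t = 1 := by
    by_contra hcon
    push_neg at hcon
    obtain ⟨t₂, ht₂, hne⟩ := hcon
    set U : Set ℝ := {t | t ∈ Set.Ioo (0:ℝ) (π/2) ∧ α t = 1} with hU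
    set V : Set ℝ := {t | t ∈ Set.Ioo (0:ℝ) (π/2) ∧ α t ≠ 1} with hV
    have hUopen : IsOpen U := by
      rw [isOpen_iff_mem_nhds]
      intro t ht
      filter_upwards [hIo.mem_nhds ht.1, (key t ht.1 ht.2).2] with x h1 h2
      exact ⟨h1, h2⟩
    have hVopen : IsOpen V := by
      rw [isOpen_iff_mem_nhds]
      intro t ht
      have hca : ContinuousAt α t := hαc.continuousAt (hIo.mem_nhds ht.1)
      have := hca.eventually_ne ht.2
      filter_upwards [hIo.mem_nhds ht.1, this] with x h1 h2
      exact ⟨h1, h2⟩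
    have hpre := isPreconnected_Ioo (a := (0:ℝ)) (b := π/2) U V hUopen hVopen
      (fun t ht => by by_cases h : α t = 1
                      · exact Or.inl ⟨ht, h⟩
                      · exact Or.inr ⟨ht, h⟩)
      ⟨t₀, ht₀, ht₀, hα₀⟩ ⟨t₂, ht₂, ht₂, hne⟩
    obtain ⟨x, _, ⟨_, hx1⟩, _, hx2⟩ := hpre
    exact hx2 hx1
  intro t ht
  exact ⟨hS t ht, (key t ht (hS t ht)).1⟩
end
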